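/- Let A be a unital *-subalgebra of L(H), {P_i} a maximal family of nonzero pairwise orthogonal self-adjoint projectors in A summing to 1, and suppose M ∈ P_i A P_j with M ≠ 0 for i ≠ j. Then P_i A P_j = ℂ·M, i.e., the off-diagonal corners are at most one-dimensional. -/

import Mathlib

open scoped BigOperators

/-- A family of nonzero, self-adjoint, pairwise orthogonal projectors in `A`. -/
def IsOrthProjFamily {E : Type*} [NormedAddCommGroup E] [InnerProductSpace ℂ E]
    [FiniteDimensional ℂ E] (A : StarSubalgebra ℂ (E →ₗ[ℂ] E))
    {p : ℕ} (P : Fin p → (E →ₗ[ℂ] E)) : Prop :=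
  (∀ i, P i ∈ A) ∧ (∀ i, P i ≠ 0) ∧ (∀ i, star (P i) = P i) ∧
    (∀ i j, P i * P j = if i = j then P i else 0)

/-- Maximality: no such family spans a strictly larger subalgebra. -/
def IsMaximalOrthProjFamily {E : Type*} [NormedAddCommGroup E] [InnerProductSpace ℂ E]
    [FiniteDimensional ℂ E] (A : StarSubalgebra ℂ (E →ₗ[ℂ] E))
    {p : ℕ} (P : Fin p → (E →ₗ[ℂ] E)) : Prop :=
  IsOrthProjFamily A P ∧
    ∀ (m : ℕ) (Q : Fin m → (E →ₗ[ℂ] E)), IsOrthProjFamily A Q →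
      ¬ Algebra.adjoin ℂ (Set.range P) < Algebra.adjoin ℂ (Set.range Q)

section Aux

variable {E : Type*} [NormedAddCommGroup E] [InnerProductSpace ℂ E] [FiniteDimensional ℂ E]

/-- If `S` is a self-adjoint element of the corner `P j A P j` which is not a scalar
multiple of `P j`, then the family `P` is not maximal. -/
lemma aux_no_nonscalar_corner (A : StarSubalgebra ℂ (E →ₗ[ℂ] E)) {p : ℕ}
    (P : Fin p → (E →ₗ[ℂ] E)) (hP : IsMaximalOrthProjFamily A P) (j : Fin p)
    (S : E →ₗ[ℂ] E) (hSA : S ∈ A) (hSst : star S = S)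
    (hPS : P j * S = S) (hSP : S * P j = S) (hSc : ∀ c : ℂ, S ≠ c • P j) : False := by
  classical
  obtain ⟨⟨hmem, hne, hst, horth⟩, hmax⟩ := hP
  have hstP : star (P j) = P j := hst j
  have hPP : P j * P j = P j := by simpa using horth j j
  -- spectral decomposition of S
  have hSsym : S.IsSymmetric := (LinearMap.isSymmetric_iff_isSelfAdjoint S).2 hSst
  have hrank : Module.finrank ℂ E = Module.finrank ℂ E := rfl
  set n := Module.finrank ℂ E with hn
  let b : OrthonormalBasis (Fin n) ℂ E := hSsym.eigenvectorBasis hrank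
  let μ : Fin n → ℝ := hSsym.eigenvalues hrank
  have hSb : ∀ i, S (b i) = (μ i : ℂ) • b i := fun i => hSsym.apply_eigenvectorBasis hrank i
  have hEig : ∀ i, Module.End.HasEigenvector S ((μ i : ℂ)) (b i) := fun i =>
    hSsym.hasEigenvector_eigenvectorBasis hrank i
  have hS0 : S ≠ 0 := fun h => hSc 0 (by simp [h])
  have hex : ∃ i, μ i ≠ 0 := by
    by_contra h
    push_neg at h
    exact hS0 (b.toBasis.ext fun i => by simp [hSb i, h i])
  obtain ⟨i₀, ht0⟩ := hex
  set t := μ i₀ with htdef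
  -- the interpolation polynomial
  set s : Finset ℝ := insert 0 (Finset.image μ Finset.univ) with hsdef
  set r : ℝ → ℝ := fun x => if x = t then 1 else 0 with hrdef
  set p₀ : Polynomial ℝ := Lagrange.interpolate s id r with hp₀
  have heval : ∀ x ∈ s, p₀.eval x = r x := fun x hx => by
    rw [hp₀]; exact Lagrange.eval_interpolate_at_node r Function.injective_id.injOn hx
  have hμs : ∀ i, μ i ∈ s := fun i => Finset.mem_insert_of_mem
    (Finset.mem_image_of_mem μ (Finset.mem_univ i))
  -- Q = p₀(S), the spectral projection of S for the eigenvalue t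
  set Q : E →ₗ[ℂ] E := Polynomial.aeval (R := ℝ) S p₀ with hQdef
  have hQb : ∀ i, Q (b i) = (if μ i = t then (1:ℂ) else 0) • b i := by
    intro i
    have h1 : Q = Polynomial.aeval (R := ℂ) S (p₀.map (algebraMap ℝ ℂ)) :=
      (Polynomial.aeval_map_algebraMap ℂ S p₀).symm
    rw [h1, Module.End.aeval_apply_of_hasEigenvector (hEig i)]
    have h2 : (p₀.map (algebraMap ℝ ℂ)).eval ((μ i : ℂ)) = ((p₀.eval (μ i) : ℝ) : ℂ) := by
      rw [Polynomial.eval_map, show ((μ i : ℂ)) = algebraMap ℝ ℂ (μ i) from rfl,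
        Polynomial.eval₂_at_apply]
      rfl
    rw [h2, heval _ (hμs i), hrdef]
    by_cases h : μ i = t <;> simp [h]
  have hQA : Q ∈ A := by
    rw [hQdef, Polynomial.aeval_eq_sum_range]
    refine sum_mem fun k _ => ?_
    rw [← algebraMap_smul ℂ (p₀.coeff k) (S ^ k)]
    exact A.smul_mem (pow_mem hSA k) _
  have hQst : star Q = Q := by
    rw [hQdef, Polynomial.aeval_eq_sum_range, star_sum]
    refine Finset.sum_congr rfl fun k _ => ?_
    rw [← algebraMap_smul ℂ (p₀.coeff k) (S ^ k), star_smul, star_pow, hSst]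
    congr 1
    simp [Complex.star_def]
  have hPb : ∀ i, μ i ≠ 0 → P j (b i) = b i := by
    intro i h
    have h2 : P j (S (b i)) = S (b i) := by rw [← Module.End.mul_apply, hPS]
    rw [hSb i, map_smul] at h2
    have hμ : (μ i : ℂ) ≠ 0 := Complex.ofReal_ne_zero.2 h
    exact smul_right_injective E hμ h2
  have hPQ : P j * Q = Q := by
    apply b.toBasis.ext
    intro i
    simp only [Module.End.mul_apply, OrthonormalBasis.coe_toBasis]
    rw [hQb i]
    by_cases h : μ i = t
    · rw [if_pos h, one_smul]
      exact hPb i (by rw [h]; exact ht0)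
    · rw [if_neg h, zero_smul]
      exact map_zero _
  have hQP : Q * P j = Q := by
    have h := congrArg star hPQ
    rwa [star_mul, hQst, hstP] at h
  have hQQ : Q * Q = Q := by
    apply b.toBasis.ext
    intro i
    simp only [Module.End.mul_apply, OrthonormalBasis.coe_toBasis]
    rw [hQb i]
    by_cases h : μ i = t <;> simp [h, hQb i]
  have hQne : Q ≠ 0 := by
    intro h
    have h0 := hQb i₀
    rw [h, if_pos rfl, one_smul] at h0
    simp only [LinearMap.zero_apply] at h0
    exact b.toBasis.ne_zero i₀ (by rw [OrthonormalBasis.coe_toBasis, ← h0])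
  -- the complementary projection R
  set R : E →ₗ[ℂ] E := P j - Q with hRdef
  have hRne : R ≠ 0 := by
    intro h
    have hQeq : Q = P j := by
      have := sub_eq_zero.1 h
      exact this.symm
    apply hSc (t : ℂ)
    rw [← hQeq]
    apply b.toBasis.ext
    intro i
    simp only [OrthonormalBasis.coe_toBasis, LinearMap.smul_apply]
    rw [hSb i, hQb i]
    by_cases h' : μ i = t
    · rw [if_pos h', one_smul, h']
    · rw [if_neg h', zero_smul, smul_zero]
      -- μ i = 0 here: P j (b i) = Q (b i) = 0 and S = S * P j
      have hPbi : P j (b i) = 0 := by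
        rw [← hQeq, hQb i, if_neg h', zero_smul]
      have hS0' : S (b i) = 0 := by
        rw [← hSP, Module.End.mul_apply, hPbi, map_zero]
      rw [hSb i] at hS0'
      exact hS0'
  have hRst : star R = R := by rw [hRdef, star_sub, hQst, hstP]
  have hRA : R ∈ A := sub_mem (hmem j) hQA
  have hQR : Q * R = 0 := by rw [hRdef, mul_sub, hQP, hQQ, sub_self]
  have hRQ : R * Q = 0 := by rw [hRdef, sub_mul, hPQ, hQQ, sub_self]
  have hRR : R * R = R := by
    rw [hRdef, sub_mul, mul_sub, mul_sub, hPP, hPQ, hQP, hQQ, sub_self, sub_zero]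
  have hQPi : ∀ i, i ≠ j → Q * P i = 0 := by
    intro i hi
    rw [← hQP, mul_assoc, horth j i, if_neg (Ne.symm hi), mul_zero]
  have hPiQ : ∀ i, i ≠ j → P i * Q = 0 := by
    intro i hi
    rw [← hPQ, ← mul_assoc, horth i j, if_neg hi, zero_mul]
  have hRPi : ∀ i, i ≠ j → R * P i = 0 := by
    intro i hi
    rw [hRdef, sub_mul, horth j i, if_neg (Ne.symm hi), hQPi i hi, sub_self]
  have hPiR : ∀ i, i ≠ j → P i * R = 0 := by
    intro i hi
    rw [hRdef, mul_sub, horth i j, if_neg hi, hPiQ i hi, sub_self]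
  -- the refined family
  set g : Fin (p + 1) → (E →ₗ[ℂ] E) := Fin.snoc (Function.update P j Q) R with hgdef
  have hgcs : ∀ k : Fin p, g (Fin.castSucc k) = if k = j then Q else P k := by
    intro k
    rw [hgdef, Fin.snoc_castSucc, Function.update_apply]
  have hglast : g (Fin.last p) = R := by rw [hgdef, Fin.snoc_last]
  have hgfam : IsOrthProjFamily A g := by
    refine ⟨?_, ?_, ?_, ?_⟩
    · intro a
      induction a using Fin.lastCases with
      | last => rw [hglast]; exact hRA
      | cast k =>
        rw [hgcs k]
        by_cases h : k = j
        · rw [if_pos h]; exact hQA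
        · rw [if_neg h]; exact hmem k
    · intro a
      induction a using Fin.lastCases with
      | last => rw [hglast]; exact hRne
      | cast k =>
        rw [hgcs k]
        by_cases h : k = j
        · rw [if_pos h]; exact hQne
        · rw [if_neg h]; exact hne k
    · intro a
      induction a using Fin.lastCases with
      | last => rw [hglast]; exact hRst
      | cast k =>
        rw [hgcs k]
        by_cases h : k = j
        · rw [if_pos h]; exact hQst
        · rw [if_neg h]; exact hst k
    · intro a c
      induction a using Fin.lastCases with
      | last =>
        induction c using Fin.lastCases with
        | last => rw [hglast, hRR, if_pos rfl]
        | cast l =>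
          have hne1 : (Fin.last p) ≠ Fin.castSucc l := (Fin.castSucc_lt_last l).ne'
          rw [hglast, if_neg hne1, hgcs l]
          by_cases h : l = j
          · rw [if_pos h, hRQ]
          · rw [if_neg h, hRPi l h]
      | cast k =>
        induction c using Fin.lastCases with
        | last =>
          have hne1 : Fin.castSucc k ≠ Fin.last p := (Fin.castSucc_lt_last k).ne
          rw [hglast, if_neg hne1, hgcs k]
          by_cases h : k = j
          · rw [if_pos h, hQR]
          · rw [if_neg h, hPiR k h]
        | cast l =>
          by_cases hkl : k = l
          · subst hkl
            rw [if_pos rfl, hgcs k]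
            by_cases h : k = j
            · rw [if_pos h, hQQ]
            · rw [if_neg h]
              simpa using horth k k
          · rw [if_neg (fun hc => hkl (Fin.castSucc_inj.1 hc)), hgcs k, hgcs l]
            by_cases h : k = j
            · by_cases h' : l = j
              · exact absurd (h.trans h'.symm) hkl
              · rw [if_pos h, if_neg h', hQPi l h']
            · by_cases h' : l = j
              · rw [if_neg h, if_pos h', hPiQ k h]
              · rw [if_neg h, if_neg h', horth k l, if_neg hkl]
  -- Q is not in the span of 1 and the P i
  have hQnotmem : Q ∉ Algebra.adjoin ℂ (Set.range P) := by
    intro hQmem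
    set sp : Submodule ℂ (E →ₗ[ℂ] E) := Submodule.span ℂ (insert 1 (Set.range P)) with hspdef
    have h1 : (1 : E →ₗ[ℂ] E) ∈ sp := Submodule.subset_span (Set.mem_insert _ _)
    have hmul : ∀ x y : E →ₗ[ℂ] E, x ∈ sp → y ∈ sp → x * y ∈ sp := by
      intro x y hx hy
      induction hx, hy using Submodule.span_induction₂ with
      | mem_mem u v hu hv =>
        rcases hu with h1u | ⟨a, rfl⟩
        · rw [h1u, one_mul]; exact Submodule.subset_span hv
        · rcases hv with h1v | ⟨c, rfl⟩
          · rw [h1v, mul_one]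
            exact Submodule.subset_span (Set.mem_insert_of_mem _ ⟨a, rfl⟩)
          · rw [horth a c]
            by_cases h : a = c
            · rw [if_pos h]
              exact Submodule.subset_span (Set.mem_insert_of_mem _ ⟨a, rfl⟩)
            · rw [if_neg h]; exact zero_mem _
      | zero_left v hv => rw [zero_mul]; exact zero_mem _
      | zero_right u hu => rw [mul_zero]; exact zero_mem _
      | add_left u v w hu hv hw h1' h2' => rw [add_mul]; exact add_mem h1' h2'
      | add_right u v w hu hv hw h1' h2' => rw [mul_add]; exact add_mem h1' h2'
      | smul_left c u v hu hv h' => rw [smul_mul_assoc]; exact Submodule.smul_mem _ _ h'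
      | smul_right c u v hu hv h' => rw [mul_smul_comm]; exact Submodule.smul_mem _ _ h'
    have hle : Algebra.adjoin ℂ (Set.range P) ≤ sp.toSubalgebra h1 hmul :=
      Algebra.adjoin_le fun x hx =>
        Submodule.subset_span (Set.mem_insert_of_mem _ hx)
    have hQsp : Q ∈ sp := hle hQmem
    rw [hspdef] at hQsp
    rw [Submodule.mem_span_insert] at hQsp
    obtain ⟨a, z, hz, hQaz⟩ := hQsp
    rw [Submodule.mem_span_range_iff_exists_fun] at hz
    obtain ⟨c, rfl⟩ := hz
    -- compute P j * Q * P j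
    have hQform : Q = (a + c j) • P j := by
      calc Q = P j * Q * P j := by rw [hPQ, hQP]
      _ = P j * (a • 1 + ∑ k, c k • P k) * P j := by rw [← hQaz]
      _ = a • (P j * 1 * P j) + ∑ k, c k • (P j * P k * P j) := by
            rw [mul_add, add_mul, Finset.mul_sum, Finset.sum_mul, mul_smul_comm,
              smul_mul_assoc]
            congr 1
            exact Finset.sum_congr rfl fun k _ => by rw [mul_smul_comm, smul_mul_assoc]
      _ = a • P j + ∑ k, c k • (P j * P k * P j) := by rw [mul_one, hPP]
      _ = a • P j + c j • P j := by
            congr 1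
            have hterm : ∀ k ∈ Finset.univ, c k • (P j * P k * P j)
                = if j = k then c k • P j else 0 := by
              intro k _
              rw [horth j k]
              by_cases h : j = k
              · rw [if_pos h, if_pos h, horth j j, if_pos rfl, ← h]
              · rw [if_neg h, if_neg h, zero_mul, smul_zero]
            rw [Finset.sum_congr rfl hterm, Finset.sum_ite_eq, if_pos (Finset.mem_univ j)]
      _ = (a + c j) • P j := by rw [add_smul]
    -- Q is an idempotent scalar multiple of P j: scalar is 0 or 1
    set d : ℂ := a + c j with hd
    have hid : (d * d - d) • P j = 0 := by
      have h2 : Q * Q = Q := hQQ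
      rw [hQform, smul_mul_assoc, mul_smul_comm, hPP, smul_smul] at h2
      rw [sub_smul, h2, sub_self]
    rcases smul_eq_zero.1 hid with hd0 | hP0
    · have hfac : d * (d - 1) = 0 := by linear_combination hd0
      rcases mul_eq_zero.1 hfac with h | h
      · exact hQne (by rw [hQform, h, zero_smul])
      · have hd1 : d = 1 := sub_eq_zero.1 h
        exact hRne (by rw [hRdef, hQform, hd1, one_smul, sub_self])
    · exact hne j hP0
  -- contradiction with maximality
  apply hmax (p + 1) g hgfam
  rw [SetLike.lt_iff_le_and_exists]
  constructor
  · apply Algebra.adjoin_le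
    rintro x ⟨k, rfl⟩
    by_cases hk : k = j
    · subst hk
      have : P k = Q + R := by rw [hRdef]; abel
      rw [this]
      exact add_mem
        (Algebra.subset_adjoin ⟨Fin.castSucc k, by rw [hgcs k, if_pos rfl]⟩)
        (Algebra.subset_adjoin ⟨Fin.last p, hglast⟩)
    · exact Algebra.subset_adjoin ⟨Fin.castSucc k, by rw [hgcs k, if_neg hk]⟩
  · exact ⟨Q, Algebra.subset_adjoin ⟨Fin.castSucc j, by rw [hgcs j, if_pos rfl]⟩, hQnotmem⟩

/-- The corner `P j A P j` is spanned by `P j`. -/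
lemma aux_corner_scalar (A : StarSubalgebra ℂ (E →ₗ[ℂ] E)) {p : ℕ}
    (P : Fin p → (E →ₗ[ℂ] E)) (hP : IsMaximalOrthProjFamily A P) (j : Fin p) :
    ∀ N ∈ A, ∃ c : ℂ, P j * N * P j = c • P j := by
  intro N hN
  by_contra hc
  push_neg at hc
  obtain ⟨⟨hmem, hne, hst, horth⟩, _⟩ := hP
  have hstP : star (P j) = P j := hst j
  have hPP : P j * P j = P j := by simpa using horth j j
  set T : E →ₗ[ℂ] E := P j * N * P j with hTdef
  have hTA : T ∈ A := mul_mem (mul_mem (hmem j) hN) (hmem j)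
  have hPT : P j * T = T := by rw [hTdef, ← mul_assoc, ← mul_assoc, hPP]
  have hTP : T * P j = T := by rw [hTdef, mul_assoc, mul_assoc, hPP, mul_assoc]
  have hPTs : P j * star T = star T := by
    have := congrArg star hTP
    rwa [star_mul, hstP] at this
  have hTsP : star T * P j = star T := by
    have := congrArg star hPT
    rwa [star_mul, hstP] at this
  set S1 : E →ₗ[ℂ] E := T + star T with hS1
  set S2 : E →ₗ[ℂ] E := Complex.I • (T - star T) with hS2
  have hS1A : S1 ∈ A := add_mem hTA (star_mem hTA)
  have hS2A : S2 ∈ A := A.smul_mem (sub_mem hTA (star_mem hTA)) _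
  have hS1st : star S1 = S1 := by rw [hS1, star_add, star_star, add_comm]
  have hS2st : star S2 = S2 := by
    rw [hS2, star_smul, star_sub, star_star, Complex.star_def, Complex.conj_I]
    rw [neg_smul, smul_sub, smul_sub, neg_sub]
  have hPS1 : P j * S1 = S1 := by rw [hS1, mul_add, hPT, hPTs]
  have hS1P : S1 * P j = S1 := by rw [hS1, add_mul, hTP, hTsP]
  have hPS2 : P j * S2 = S2 := by rw [hS2, mul_smul_comm, mul_sub, hPT, hPTs]
  have hS2P : S2 * P j = S2 := by rw [hS2, smul_mul_assoc, sub_mul, hTP, hTsP]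
  by_cases h1 : ∀ c : ℂ, S1 ≠ c • P j
  · exact aux_no_nonscalar_corner A P ⟨⟨hmem, hne, hst, horth⟩, ‹_›⟩ j S1 hS1A hS1st hPS1 hS1P h1
  · push_neg at h1
    obtain ⟨c1, hc1⟩ := h1
    by_cases h2 : ∀ c : ℂ, S2 ≠ c • P j
    · exact aux_no_nonscalar_corner A P ⟨⟨hmem, hne, hst, horth⟩, ‹_›⟩ j S2 hS2A hS2st hPS2 hS2P h2
    · push_neg at h2
      obtain ⟨c2, hc2⟩ := h2
      apply hc ((c1 - Complex.I * c2) / 2)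
      have hTT : (2 : ℂ) • T = S1 + (- Complex.I) • S2 := by
        rw [hS1, hS2, smul_smul]
        have : -Complex.I * Complex.I = 1 := by
          rw [neg_mul, Complex.I_mul_I, neg_neg]
        rw [this, one_smul, two_smul]
        abel
      have hT2 : T = (((1:ℂ)/2)) • ((2:ℂ) • T) := by
        rw [smul_smul]; norm_num
      rw [hT2, hTT, hc1, hc2]
      module
  done

end Aux

theorem offdiagonal_corner_one_dimensional
    {E : Type*} [NormedAddCommGroup E] [InnerProductSpace ℂ E] [FiniteDimensional ℂ E]
    (A : StarSubalgebra ℂ (E →ₗ[ℂ] E)) {p : ℕ} (P : Fin p → (E →ₗ[ℂ] E))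
    (hP : IsMaximalOrthProjFamily A P)
    (i j : Fin p) (hij : i ≠ j) (M : E →ₗ[ℂ] E) (hMA : M ∈ A)
    (hM : ∃ N ∈ A, M = P i * N * P j) (hM0 : M ≠ 0) :
    ∀ N ∈ A, ∃ mu : ℂ, P i * N * P j = mu • M := by
  obtain ⟨N₀, hN₀A, hMdef⟩ := hM
  obtain ⟨⟨hmem, hne, hst, horth⟩, hmax⟩ := hP
  have hPPj : P j * P j = P j := by simpa using horth j j
  have hPPi : P i * P i = P i := by simpa using horth i i
  have hPiM : P i * M = M := by rw [hMdef, ← mul_assoc, ← mul_assoc, hPPi]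
  have hMPj : M * P j = M := by rw [hMdef, mul_assoc, mul_assoc, hPPj, mul_assoc]
  have hMsPi : star M * P i = star M := by
    have := congrArg star hPiM
    rwa [star_mul, hst i] at this
  have hPjMs : P j * star M = star M := by
    have := congrArg star hMPj
    rwa [star_mul, hst j] at this
  -- star X * X = 0 implies X = 0
  have key : ∀ X : E →ₗ[ℂ] E, star X * X = 0 → X = 0 := by
    intro X h
    ext x
    have h1 : LinearMap.adjoint X (X x) = 0 := by
      have h0 := congrArg (fun f : E →ₗ[ℂ] E => f x) h
      simpa [Module.End.mul_apply, LinearMap.star_eq_adjoint] using h0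
    have h2 : (inner ℂ (X x) (X x) : ℂ) = 0 := by
      rw [← LinearMap.adjoint_inner_left, h1, inner_zero_left]
    simpa using inner_self_eq_zero.1 h2
  -- MM* = lam • P i with lam ≠ 0
  have hYA : M * star M ∈ A := mul_mem hMA (star_mem hMA)
  have hYcorner : P i * (M * star M) * P i = M * star M := by
    rw [← mul_assoc, hPiM, mul_assoc, hMsPi]
  obtain ⟨lam, hlam⟩ := aux_corner_scalar A P ⟨⟨hmem, hne, hst, horth⟩, hmax⟩ i
    (M * star M) hYA
  rw [hYcorner] at hlam
  have hlam0 : lam ≠ 0 := by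
    intro h
    rw [h, zero_smul] at hlam
    apply hM0
    have hMs0 : star M = 0 := key (star M) (by rwa [star_star])
    rw [← star_star M, hMs0, star_zero]
  -- main computation
  intro N hNA
  set T : E →ₗ[ℂ] E := P i * N * P j with hTdef
  have hPiT : P i * T = T := by rw [hTdef, ← mul_assoc, ← mul_assoc, hPPi]
  have hTPj : T * P j = T := by rw [hTdef, mul_assoc, mul_assoc, hPPj, mul_assoc]
  have hXA : star M * T ∈ A := mul_mem (star_mem hMA) (mul_mem (mul_mem (hmem i) hNA) (hmem j))
  have hXcorner : P j * (star M * T) * P j = star M * T := by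
    rw [← mul_assoc, hPjMs, mul_assoc, hTPj]
  obtain ⟨mu0, hmu0⟩ := aux_corner_scalar A P ⟨⟨hmem, hne, hst, horth⟩, hmax⟩ j
    (star M * T) hXA
  rw [hXcorner] at hmu0
  refine ⟨lam⁻¹ * mu0, ?_⟩
  have hcalc : lam • T = mu0 • M := by
    calc lam • T = (lam • P i) * T := by rw [smul_mul_assoc, hPiT]
    _ = (M * star M) * T := by rw [hlam]
    _ = M * (star M * T) := by rw [mul_assoc]
    _ = M * (mu0 • P j) := by rw [hmu0]
    _ = mu0 • (M * P j) := by rw [mul_smul_comm]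
    _ = mu0 • M := by rw [hMPj]
  calc P i * N * P j = T := rfl
  _ = lam⁻¹ • (lam • T) := by rw [smul_smul, inv_mul_cancel₀ hlam0, one_smul]
  _ = lam⁻¹ • (mu0 • M) := by rw [hcalc]
  _ = (lam⁻¹ * mu0) • M := by rw [smul_smul]
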